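/- Assume p = 3. For integers e, e' ≥ 0 set q = 3^e and q' = 3^{e'}, and define σ_e, τ_{e'} : SL(2,k) → SL(4,k) by σ_e([[a,b],[c,d]]) = [[a^{3q}, b^{3q}, a^{2q}b^{q}, (1/2)a^{q}b^{2q}], [c^{3q}, d^{3q}, c^{2q}d^{q}, (1/2)c^{q}d^{2q}], [0, 0, a^{q}, b^{q}], [0, 0, c^{q}, d^{q}]] and τ_{e'}([[a,b],[c,d]]) = [[a^{q'}, b^{q'}, (1/2)a^{2q'}c^{q'}, (1/2)b^{2q'}d^{q'}], [c^{q'}, d^{q'}, a^{q'}c^{2q'}, b^{q'}d^{2q'}], [0, 0, a^{3q'}, b^{3q'}], [0, 0, c^{3q'}, d^{3q'}]]. Then for all integers e, e' ≥ 0 the homomorphisms σ_e and τ_{e'} are not equivalent: there exists no P ∈ GL(4,k) such that P⁻¹·σ_e(A)·P = τ_{e'}(A) for all A ∈ SL(2,k). -/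
import Mathlib


open Matrix

/-- Family (II) (for `p = 3`). -/
noncomputable def famII (k : Type*) [Field k] (q : ℕ)
    (A : SpecialLinearGroup (Fin 2) k) : Matrix (Fin 4) (Fin 4) k :=
  let a := A.1 0 0
  let b := A.1 0 1
  let c := A.1 1 0
  let d := A.1 1 1
  !![a ^ (3 * q), b ^ (3 * q), a ^ (2 * q) * b ^ q, (1 / 2 : k) * (a ^ q * b ^ (2 * q));
     c ^ (3 * q), d ^ (3 * q), c ^ (2 * q) * d ^ q, (1 / 2 : k) * (c ^ q * d ^ (2 * q));
     0, 0, a ^ q, b ^ q;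
     0, 0, c ^ q, d ^ q]

/-- Family (VII) (for `p = 3`). -/
noncomputable def famVII (k : Type*) [Field k] (q : ℕ)
    (A : SpecialLinearGroup (Fin 2) k) : Matrix (Fin 4) (Fin 4) k :=
  let a := A.1 0 0
  let b := A.1 0 1
  let c := A.1 1 0
  let d := A.1 1 1
  !![a ^ q, b ^ q, (1 / 2 : k) * (a ^ (2 * q) * c ^ q), (1 / 2 : k) * (b ^ (2 * q) * d ^ q);
     c ^ q, d ^ q, a ^ q * c ^ (2 * q), b ^ q * d ^ (2 * q);
     0, 0, a ^ (3 * q), b ^ (3 * q);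
     0, 0, c ^ (3 * q), d ^ (3 * q)]

section Aux

variable {k : Type*} [Field k] [Infinite k]

lemma aux_pow_inj {m n : ℕ} (h : ∀ t : k, t ≠ 0 → t ^ m = t ^ n) : m = n := by
  have h' : ∀ t : k, t ^ (m + 1) = t ^ (n + 1) := by
    intro t
    by_cases ht : t = 0
    · simp [ht]
    · rw [pow_succ, pow_succ, h t ht]
  have hX : (Polynomial.X ^ (m + 1) : Polynomial k) = Polynomial.X ^ (n + 1) := by
    apply Polynomial.funext
    intro r
    simpa using h' r
  have := congrArg Polynomial.natDegree hX
  simpa [Polynomial.natDegree_X_pow] using this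

lemma aux_mixed {m n : ℕ} (hn : m + n ≠ 0)
    (h : ∀ t : k, t ≠ 0 → t ^ m = (t ^ n)⁻¹) : False := by
  apply hn
  have h' : ∀ t : k, t ≠ 0 → t ^ (m + n) = t ^ 0 := by
    intro t ht
    rw [pow_add, pow_zero, h t ht, inv_mul_cancel₀ (pow_ne_zero n ht)]
  exact aux_pow_inj h'

lemma aux_mixed' {m n : ℕ} (hn : m + n ≠ 0)
    (h : ∀ t : k, t ≠ 0 → (t ^ m)⁻¹ = t ^ n) : False := by
  apply aux_mixed (k := k) (m := n) (n := m) (by omega)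
  intro t ht
  exact (h t ht).symm

end Aux

section Aux2

variable {k : Type*} [Field k]

lemma aux_col_ne_zero (u : GL (Fin 4) k) (j : Fin 4) :
    ∃ i, (u : Matrix (Fin 4) (Fin 4) k) i j ≠ 0 := by
  by_contra h
  push_neg at h
  have h1 : ((u⁻¹ : GL (Fin 4) k) : Matrix (Fin 4) (Fin 4) k) * u = 1 := u.inv_mul
  have h2 := congrFun (congrFun h1 j) j
  rw [Matrix.mul_apply] at h2
  simp [h, Matrix.one_apply] at h2

lemma aux_row_ne_zero (u : GL (Fin 4) k) (i : Fin 4) :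
    ∃ j, (u : Matrix (Fin 4) (Fin 4) k) i j ≠ 0 := by
  by_contra h
  push_neg at h
  have h1 : (u : Matrix (Fin 4) (Fin 4) k) * ((u⁻¹ : GL (Fin 4) k) : Matrix (Fin 4) (Fin 4) k) = 1 :=
    u.mul_inv
  have h2 := congrFun (congrFun h1 i) i
  rw [Matrix.mul_apply] at h2
  simp [h, Matrix.one_apply] at h2

noncomputable def Dmat (t : k) (ht : t ≠ 0) : SpecialLinearGroup (Fin 2) k :=
  ⟨!![t, 0; 0, t⁻¹], by simp [Matrix.det_fin_two_of, mul_inv_cancel₀ ht]⟩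

def umat : SpecialLinearGroup (Fin 2) k :=
  ⟨!![1, 1; 0, 1], by simp [Matrix.det_fin_two_of]⟩

lemma famII_D (q : ℕ) (hq : q ≠ 0) (t : k) (ht : t ≠ 0) :
    famII k q (Dmat t ht) = Matrix.diagonal ![t ^ (3 * q), t⁻¹ ^ (3 * q), t ^ q, t⁻¹ ^ q] := by
  have h2 : 2 * q ≠ 0 := by omega
  have h3 : 3 * q ≠ 0 := by omega
  ext i j
  fin_cases i <;> fin_cases j <;>
    simp [famII, Dmat, Matrix.diagonal, Matrix.vecHead, Matrix.vecTail, zero_pow hq, zero_pow h2, zero_pow h3]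

lemma famVII_D (q : ℕ) (hq : q ≠ 0) (t : k) (ht : t ≠ 0) :
    famVII k q (Dmat t ht) = Matrix.diagonal ![t ^ q, t⁻¹ ^ q, t ^ (3 * q), t⁻¹ ^ (3 * q)] := by
  have h2 : 2 * q ≠ 0 := by omega
  have h3 : 3 * q ≠ 0 := by omega
  ext i j
  fin_cases i <;> fin_cases j <;>
    simp [famVII, Dmat, Matrix.diagonal, Matrix.vecHead, Matrix.vecTail, zero_pow hq, zero_pow h2, zero_pow h3]

end Aux2

/-- For `p = 3`, the homomorphisms `σ_e` of family (II) and `τ_{e'}` of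
family (VII) are never equivalent, for any `e, e' ≥ 0`. -/
theorem stmt17 {k : Type*} [Field k] [IsAlgClosed k] {p : ℕ} [Fact p.Prime] [CharP k p]
    (hp : p = 3) (e e' : ℕ) :
    ¬∃ P : GL (Fin 4) k, ∀ A : SpecialLinearGroup (Fin 2) k,
      ((P⁻¹ : GL (Fin 4) k) : Matrix (Fin 4) (Fin 4) k) * famII k (p ^ e) A *
          (P : Matrix (Fin 4) (Fin 4) k) =
        famVII k (p ^ e') A := by

  rintro ⟨P, hP0⟩
  set q := p ^ e with hqdef
  set q' := p ^ e' with hq'def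
  have hppos : 0 < p := (Fact.out (p := p.Prime)).pos
  have hq : q ≠ 0 := (pow_pos hppos e).ne'
  have hq' : q' ≠ 0 := (pow_pos hppos e').ne'
  have hP : ∀ A, famII k q A * (P : Matrix (Fin 4) (Fin 4) k)
      = (P : Matrix (Fin 4) (Fin 4) k) * famVII k q' A := by
    intro A
    have h := congrArg (fun M => (P : Matrix (Fin 4) (Fin 4) k) * M) (hP0 A)
    simp only [← Matrix.mul_assoc] at h
    rwa [Units.mul_inv, Matrix.one_mul] at h
  -- entrywise diagonal relations
  have hdiag : ∀ t : k, t ≠ 0 → ∀ i j,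
      (![t ^ (3 * q), t⁻¹ ^ (3 * q), t ^ q, t⁻¹ ^ q] i) * (P : Matrix (Fin 4) (Fin 4) k) i j
        = (P : Matrix (Fin 4) (Fin 4) k) i j *
          (![t ^ q', t⁻¹ ^ q', t ^ (3 * q'), t⁻¹ ^ (3 * q')] j) := by
    intro t ht i j
    have h := hP (Dmat t ht)
    rw [famII_D q hq t ht, famVII_D q' hq' t ht] at h
    have h' := congrFun (congrFun h i) j
    rwa [Matrix.diagonal_mul, Matrix.mul_diagonal] at h'
  have key : ∀ i j, (P : Matrix (Fin 4) (Fin 4) k) i j ≠ 0 →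
      ∀ t : k, t ≠ 0 →
        (![t ^ (3 * q), t⁻¹ ^ (3 * q), t ^ q, t⁻¹ ^ q] i)
          = (![t ^ q', t⁻¹ ^ q', t ^ (3 * q'), t⁻¹ ^ (3 * q')] j) := by
    intro i j hij t ht
    have h := hdiag t ht i j
    rw [mul_comm] at h
    exact mul_left_cancel₀ hij h
  -- row 0: 3q = q' or q = q'
  have hrow0 : 3 * q = q' ∨ q = q' := by
    obtain ⟨j, hj⟩ := aux_row_ne_zero P 0
    have hk := key 0 j hj
    fin_cases j
    · left; exact aux_pow_inj (by simpa using hk)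
    · exact (aux_mixed (m := 3 * q) (n := q') (by omega)
        (fun t ht => by simpa using hk t ht)).elim
    · right
      have : 3 * q = 3 * q' := aux_pow_inj (by simpa using hk)
      omega
    · exact (aux_mixed (m := 3 * q) (n := 3 * q') (by omega)
        (fun t ht => by simpa using hk t ht)).elim
  -- row 2: q = q' or q = 3q'
  have hrow2 : q = q' ∨ q = 3 * q' := by
    obtain ⟨j, hj⟩ := aux_row_ne_zero P 2
    have hk := key 2 j hj
    fin_cases j
    · left; exact aux_pow_inj (by simpa using hk)
    · exact (aux_mixed (m := q) (n := q') (by omega)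
        (fun t ht => by simpa using hk t ht)).elim
    · right; exact aux_pow_inj (by simpa using hk)
    · exact (aux_mixed (m := q) (n := 3 * q') (by omega)
        (fun t ht => by simpa using hk t ht)).elim
  have hqq' : q = q' := by rcases hrow0 with h1 | h1 <;> rcases hrow2 with h2 | h2 <;> omega
  -- column 0 is almost zero
  have h00 : (P : Matrix (Fin 4) (Fin 4) k) 0 0 = 0 := by
    by_contra h
    have : 3 * q = q' := aux_pow_inj (fun t ht => by simpa using key 0 0 h t ht)
    omega
  have h10 : (P : Matrix (Fin 4) (Fin 4) k) 1 0 = 0 := by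
    by_contra h
    exact aux_mixed' (m := 3 * q) (n := q') (by omega)
      (fun t ht => by simpa using key 1 0 h t ht)
  have h30 : (P : Matrix (Fin 4) (Fin 4) k) 3 0 = 0 := by
    by_contra h
    exact aux_mixed' (m := q) (n := q') (by omega)
      (fun t ht => by simpa using key 3 0 h t ht)
  -- unipotent element
  have hu := congrFun (congrFun (hP umat) 0) 0
  rw [Matrix.mul_apply, Matrix.mul_apply, Fin.sum_univ_four, Fin.sum_univ_four] at hu
  simp [famII, famVII, umat, Matrix.vecHead, Matrix.vecTail, h00, h10, h30, zero_pow hq'] at hu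
  -- hu should say P 2 0 = 0
  obtain ⟨i, hi⟩ := aux_col_ne_zero P 0
  fin_cases i
  · exact hi h00
  · exact hi h10
  · exact hi hu
  · exact hi h30
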